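/- arXiv:1801.09575 — 2 statements merged into one kernel-verified Lean document; each statement's English description precedes it below -/
import Mathlib

section
/- Let F be an ordered field and n ≥ 2. The polynomial x₁² + x₂² + ⋯ + xₙ² − 1 is irreducible in F[x₁, …, xₙ]. -/
set_option maxHeartbeats 1000000
set_option synthInstance.maxHeartbeats 400000
set_option maxRecDepth 4000

open Polynomial MvPolynomial in
/-- Over an ordered field, the polynomial `x₁² + ⋯ + xₙ² − 1` is irreducible for `n ≥ 2`. -/
theorem stmt3 {F : Type*} [Field F] [LinearOrder F] [IsStrictOrderedRing F] (n : ℕ) (hn : 2 ≤ n) :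
    Irreducible ((∑ i : Fin n, (MvPolynomial.X i) ^ 2) - 1 : MvPolynomial (Fin n) F) := by
  obtain ⟨m, rfl⟩ : ∃ m, n = m + 1 := ⟨n - 1, by omega⟩
  have hm : 1 ≤ m := by omega
  set R := MvPolynomial (Fin m) F
  set c : R := 1 - ∑ i : Fin m, (MvPolynomial.X i) ^ 2 with hc
  -- no square root of c in R
  have hnsq : ∀ r : R, r ^ 2 ≠ c := by
    intro r hr
    have := congrArg (MvPolynomial.eval (fun _ : Fin m => (2 : F))) hr
    simp [hc, MvPolynomial.eval_sub] at this
    have h1 : (0:F) ≤ MvPolynomial.eval (fun _ : Fin m => (2 : F)) r ^ 2 := sq_nonneg _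
    rw [this] at h1
    have h2 : (1:F) ≤ m := by exact_mod_cast Nat.one_le_cast.mpr hm
    nlinarith
  -- transfer via finSuccEquiv
  have key : Irreducible ((X : R[X]) ^ 2 - Polynomial.C c) := by
    have hmonic : ((X : R[X]) ^ 2 - Polynomial.C c).Monic :=
      monic_X_pow_sub_C c (by norm_num)
    rw [hmonic.irreducible_iff_irreducible_map_fraction_map (K := FractionRing R)]
    rw [Polynomial.map_sub, Polynomial.map_pow, Polynomial.map_X, Polynomial.map_C]
    refine X_pow_sub_C_irreducible_of_prime Nat.prime_two ?_
    intro b hb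
    have hint : IsIntegral R b := by
      refine ⟨Polynomial.X ^ 2 - Polynomial.C c, monic_X_pow_sub_C c (by norm_num), ?_⟩
      simp [Polynomial.eval₂_sub, hb]
    obtain ⟨r, hrb⟩ := IsIntegrallyClosed.isIntegral_iff.mp hint
    apply hnsq r
    apply IsFractionRing.injective R (FractionRing R)
    rw [map_pow, hrb, hb]
  have himg : (MvPolynomial.finSuccEquiv F m)
      ((∑ i : Fin (m+1), (MvPolynomial.X i) ^ 2) - 1 : MvPolynomial (Fin (m+1)) F)
      = (X : R[X]) ^ 2 - Polynomial.C c := by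
    rw [map_sub, map_one, Fin.sum_univ_succ, map_add, map_sum]
    simp only [map_pow, MvPolynomial.finSuccEquiv_X_zero, MvPolynomial.finSuccEquiv_X_succ]
    simp only [← Polynomial.C_pow]
    rw [← map_sum Polynomial.C, hc, map_sub, map_one]
    ring
  rw [← himg] at key
  exact (MulEquiv.irreducible_iff (MvPolynomial.finSuccEquiv F m).toMulEquiv).mp key
end

section
/- Let F be an ordered field and let H_i : Σⱼ a_{ij} xⱼ = c_i, 1 ≤ i ≤ m+1, be m+1 hyperplanes in F^m forming a simplex with vertices P₁, …, P_{m+1}, where P_i is the vertex opposite H_i (the intersection of all H_j for j ≠ i). Suppose each normal (a_{i1}, …, a_{im}) is outward pointing, i.e., Σⱼ a_{ij}(P_i)ⱼ < c_i for each i. Then the determinant of the (m+1)×(m+1) matrix whose i-th row is (1, (P_i)₁, …, (P_i)_m) is positive if and only if the determinant of the (m+1)×(m+1) matrix whose i-th row is (a_{i1}, …, a_{im}, c_i) is positive. -/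
/-- For a simplex bounded by `m+1` hyperplanes with outward-pointing normals, the vertex
orientation determinant is positive iff the coefficient determinant is positive. -/
theorem stmt10 {F : Type*} [Field F] [LinearOrder F] [IsStrictOrderedRing F] (m : ℕ)
    (a : Fin (m + 1) → (Fin m → F)) (c : Fin (m + 1) → F)
    (P : Fin (m + 1) → (Fin m → F))
    -- `P i` is the vertex opposite `H_i`: it lies on every `H j`, `j ≠ i`, and is the
    -- unique such point
    (hmem : ∀ i j, j ≠ i → ∑ l, a j l * P i l = c j)
    (huniq : ∀ i, ∀ x : Fin m → F, (∀ j, j ≠ i → ∑ l, a j l * x l = c j) → x = P i)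
    -- outward normals
    (hout : ∀ i, ∑ l, a i l * P i l < c i) :
    0 < (Matrix.of fun i => Fin.cons (1 : F) (P i)).det ↔
      0 < (Matrix.of fun i => Fin.snoc (a i) (c i)).det := by
  clear huniq
  set d : Fin (m + 1) → F := fun i => (∑ l, a i l * P i l) - c i with hd
  have hdneg : ∀ i, d i < 0 := fun i => sub_neg.mpr (hout i)
  set M : Matrix (Fin (m + 1)) (Fin (m + 1)) F :=
    Matrix.of fun i => Fin.cons (1 : F) (P i) with hM
  set N : Matrix (Fin (m + 1)) (Fin (m + 1)) F :=
    Matrix.of fun i => Fin.snoc (a i) (c i) with hN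
  set M' : Matrix (Fin (m + 1)) (Fin (m + 1)) F :=
    Matrix.of fun i => Fin.snoc (P i) (1 : F) with hM'
  set B : Matrix (Fin (m + 1)) (Fin (m + 1)) F :=
    Matrix.of fun i => Fin.snoc (a i) (-(c i)) with hB
  -- Step 1 : M' * Bᵀ is diagonal
  have hprod : M' * B.transpose = Matrix.diagonal d := by
    ext i j
    simp only [Matrix.mul_apply, Matrix.transpose_apply, hM', hB, Matrix.of_apply]
    rw [Fin.sum_univ_castSucc]
    simp only [Fin.snoc_castSucc, Fin.snoc_last]
    have hc : (∑ l, P i l * a j l) = ∑ l, a j l * P i l :=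
      Finset.sum_congr rfl fun l _ => mul_comm _ _
    rcases eq_or_ne j i with rfl | hji
    · simp [Matrix.diagonal, hd, hc]; ring
    · rw [Matrix.diagonal_apply_ne' _ hji, hc, hmem i j hji]; ring
  have hdet1 : M'.det * B.det = ∏ i, d i := by
    have h := congrArg Matrix.det hprod
    rwa [Matrix.det_mul, Matrix.det_transpose, Matrix.det_diagonal] at h
  -- Step 2 : relate M and M' by a column rotation
  have hMM' : M = M'.submatrix id (finRotate (m + 1)).symm := by
    ext i j
    simp only [Matrix.submatrix_apply, id_eq, hM, hM', Matrix.of_apply]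
    refine Fin.cases ?_ (fun k => ?_) j
    · have h0 : (finRotate (m + 1)).symm 0 = Fin.last m := by
        rw [Equiv.symm_apply_eq, finRotate_succ_apply]
        simp
      rw [h0]
      simp
    · have hk : (finRotate (m + 1)).symm k.succ = k.castSucc := by
        rw [Equiv.symm_apply_eq, finRotate_succ_apply, Fin.coeSucc_eq_succ]
      rw [hk]
      simp
  have hdetM : M.det = (-1 : F) ^ m * M'.det := by
    rw [hMM', Matrix.det_permute', Equiv.Perm.sign_symm, sign_finRotate]
    push_cast
    ring
  -- Step 3 : relate N and B by negating the last column
  have hBN : B = N.updateCol (Fin.last m) ((-1 : F) • fun i => c i) := by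
    ext i j
    rcases eq_or_ne j (Fin.last m) with rfl | hj
    · simp [hB, Matrix.updateCol_apply]
    · obtain ⟨k, rfl⟩ := Fin.exists_castSucc_eq.mpr hj
      simp [hB, hN, Matrix.updateCol_apply, hj]
  have hdetB : B.det = -N.det := by
    rw [hBN, Matrix.det_updateCol_smul]
    have : N.updateCol (Fin.last m) (fun i => c i) = N := by
      have : (fun i => c i) = fun i => N i (Fin.last m) := by
        funext i; simp [hN]
      rw [this, Matrix.updateCol_eq_self]
    rw [this]; ring
  -- Step 4 : det M * det N = ∏ (-(d i)) > 0
  have hneg : ∏ i, (-(d i)) = (-1 : F) ^ (m + 1) * ∏ i, d i := by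
    calc ∏ i, -d i = ∏ i : Fin (m + 1), (-1 : F) * d i := by simp
      _ = (-1 : F) ^ (m + 1) * ∏ i, d i := by
          rw [Finset.prod_mul_distrib, Finset.prod_const, Finset.card_univ, Fintype.card_fin]
  have key : M.det * N.det = ∏ i, (-(d i)) := by
    have hNdet : N.det = -B.det := by rw [hdetB]; ring
    rw [hdetM, hNdet, hneg]
    calc (-1 : F) ^ m * M'.det * -B.det = (-1 : F) ^ (m + 1) * (M'.det * B.det) := by ring
    _ = (-1 : F) ^ (m + 1) * ∏ i, d i := by rw [hdet1]
  have hpos : 0 < M.det * N.det := by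
    rw [key]
    exact Finset.prod_pos fun i _ => neg_pos.mpr (hdneg i)
  rcases mul_pos_iff.mp hpos with ⟨h1, h2⟩ | ⟨h1, h2⟩
  · exact ⟨fun _ => h2, fun _ => h1⟩
  · exact ⟨fun h => absurd h (not_lt.mpr h1.le), fun h => absurd h (not_lt.mpr h2.le)⟩
end
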